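/- Define R_i^{*j} to be the i×i matrix obtained from R_{i-1} by appending the row/column ρ_i^{*j} = (R_{1j},...,R_{i-1,j}) with diagonal entry 1 (so R_i^{*j} = [[R_{i-1}, (ρ_i^{*j})^T],[ρ_i^{*j}, 1]]). Then for j ≥ i+1 ≥ 3: det(R_i^{*j})/det(R_{i-1}) - det(R_{i+1}^{*j})/det(R_i) = (R_{ij} - ρ_i^{*j} R_{i-1}^{-1} ρ_i^T)^2 · det(R_{i-1})/det(R_i). -/

import Mathlib

open Matrix

/-- Leading `i × i` principal submatrix. -/
def lead {n : ℕ} (R : Matrix (Fin n) (Fin n) ℝ) (i : ℕ) (h : i ≤ n) :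
    Matrix (Fin i) (Fin i) ℝ :=
  R.submatrix (Fin.castLE h) (Fin.castLE h)

/-- First `i` entries of column `j` of `R`. -/
def colv {n : ℕ} (R : Matrix (Fin n) (Fin n) ℝ) (i : ℕ) (h : i ≤ n) (j : Fin n) :
    Fin i → ℝ :=
  fun k => R (Fin.castLE h k) j


/-- The bordered matrix `R_{i+1}^{*j}` (0-indexed size parameter `i`):
`[[R_i, (ρ_{i+1}^{*j})ᵀ], [ρ_{i+1}^{*j}, 1]]`, i.e. the leading `i × i`
submatrix bordered by the first `i` entries of column `j` with corner `1`. -/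
def brd {n : ℕ} (R : Matrix (Fin n) (Fin n) ℝ) (i : ℕ) (h : i ≤ n) (j : Fin n) :
    Matrix (Fin (i + 1)) (Fin (i + 1)) ℝ :=
  Matrix.of fun k l =>
    if hk : (k : ℕ) < i then
      if hl : (l : ℕ) < i then R ⟨k, lt_of_lt_of_le hk h⟩ ⟨l, lt_of_lt_of_le hl h⟩
      else R ⟨k, lt_of_lt_of_le hk h⟩ j
    else if hl : (l : ℕ) < i then R ⟨l, lt_of_lt_of_le hl h⟩ j
    else 1

lemma lead_posDef {n : ℕ} {R : Matrix (Fin n) (Fin n) ℝ} (hR : R.PosDef)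
    (i : ℕ) (h : i ≤ n) : (lead R i h).PosDef := by
  rw [posDef_iff_dotProduct_mulVec]
  constructor
  · exact hR.1.submatrix _
  · intro x hx
    classical
    set e : Fin i ⊕ Fin (n - i) ≃ Fin n :=
      finSumFinEquiv.trans (finCongr (Nat.add_sub_cancel' h)) with he
    have he1 : ∀ a : Fin i, e (Sum.inl a) = Fin.castLE h a := by
      intro a; apply Fin.ext; simp [he, finSumFinEquiv]
    set y : Fin n → ℝ := fun k => Sum.elim x 0 (e.symm k) with hy
    have hyc : ∀ a : Fin i, y (e (Sum.inl a)) = x a := by intro a; simp [hy]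
    have hyr : ∀ b : Fin (n - i), y (e (Sum.inr b)) = 0 := by intro b; simp [hy]
    have hyn : y ≠ 0 := by
      intro h0
      apply hx
      funext a
      have := congrFun h0 (e (Sum.inl a))
      rwa [hyc] at this
    have key : star x ⬝ᵥ (lead R i h) *ᵥ x = star y ⬝ᵥ R *ᵥ y := by
      have : star y ⬝ᵥ R *ᵥ y
          = ∑ s : Fin i ⊕ Fin (n - i), y (e s) * ∑ t : Fin i ⊕ Fin (n - i),
              R (e s) (e t) * y (e t) := by
        simp only [star_trivial, dotProduct, mulVec]
        rw [← Equiv.sum_comp e]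
        refine Finset.sum_congr rfl fun s _ => ?_
        congr 1
        rw [← Equiv.sum_comp e]
      rw [this]
      simp only [Fintype.sum_sum_type, hyr, hyc, mul_zero, zero_mul, add_zero,
        Finset.sum_const_zero]
      simp only [star_trivial, dotProduct, mulVec, lead, submatrix_apply, he1]
    rw [key]
    exact hR.dotProduct_mulVec_pos hyn

lemma CMB {m : ℕ} {ι : Type*} (M : Matrix (Fin m) (Fin m) ℝ) (C : Matrix ι (Fin m) ℝ)
    (B : Matrix (Fin m) ι ℝ) (a b : ι) :
    (C * M * B) a b = (fun k => C a k) ⬝ᵥ M *ᵥ (fun k => B k b) := by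
  simp only [Matrix.mul_apply, mulVec, dotProduct, Finset.sum_mul, Finset.mul_sum]
  rw [Finset.sum_comm]
  exact Finset.sum_congr rfl fun k _ => Finset.sum_congr rfl fun l _ => by ring

lemma symq {m : ℕ} (M : Matrix (Fin m) (Fin m) ℝ) (hM : M.IsHermitian) (u v : Fin m → ℝ) :
    u ⬝ᵥ M *ᵥ v = v ⬝ᵥ M *ᵥ u := by
  have ht : Mᵀ = M := by rw [← conjTranspose_eq_transpose_of_trivial]; exact hM
  rw [dotProduct_mulVec]
  conv_lhs => rw [← ht]
  rw [vecMul_transpose, dotProduct_comm]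

lemma brd_block {n : ℕ} (R : Matrix (Fin n) (Fin n) ℝ) (i : ℕ) (h : i ≤ n) (j : Fin n) :
    (brd R i h j).submatrix finSumFinEquiv finSumFinEquiv
      = fromBlocks (lead R i h) (Matrix.of fun k (_ : Fin 1) => colv R i h j k)
          (Matrix.of fun (_ : Fin 1) k => colv R i h j k) 1 := by
  ext k l
  cases k with
  | inl a =>
    cases l with
    | inl a' => simp [brd, lead, colv, finSumFinEquiv, a.isLt, a'.isLt]; rfl
    | inr b => simp [brd, lead, colv, finSumFinEquiv, a.isLt]; rfl
  | inr b =>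
    cases l with
    | inl a' => simp [brd, lead, colv, finSumFinEquiv, a'.isLt]; rfl
    | inr b' => simp [brd, finSumFinEquiv, Fin.fin_one_eq_zero]

lemma det_brd {n : ℕ} {R : Matrix (Fin n) (Fin n) ℝ} (hR : R.PosDef) (i : ℕ) (h : i ≤ n)
    (j : Fin n) :
    (brd R i h j).det = (lead R i h).det *
      (1 - colv R i h j ⬝ᵥ (lead R i h)⁻¹ *ᵥ colv R i h j) := by
  have hdet : IsUnit (lead R i h).det :=
    isUnit_iff_ne_zero.mpr (lead_posDef hR i h).det_pos.ne'
  haveI : Invertible (lead R i h) := (lead R i h).invertibleOfIsUnitDet hdet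
  rw [← det_submatrix_equiv_self finSumFinEquiv, brd_block, det_fromBlocks₁₁,
    invOf_eq_nonsing_inv]
  congr 1
  rw [det_fin_one]
  simp only [Matrix.sub_apply, one_apply_eq, CMB]
  rfl

lemma brd2_block {n : ℕ} (R : Matrix (Fin n) (Fin n) ℝ) (hsym : ∀ p q, R p q = R q p)
    (hdiag : ∀ k, R k k = 1) (m : ℕ) (hm : m + 1 ≤ n) (j : Fin n) (hj : m + 1 ≤ (j : ℕ)) :
    (brd R (m + 1) hm j).submatrix (finSumFinEquiv (m := m) (n := 2))
        (finSumFinEquiv (m := m) (n := 2))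
      = fromBlocks (lead R m (Nat.le_of_succ_le hm))
          (Matrix.of fun k (b : Fin 2) =>
            ![colv R m (Nat.le_of_succ_le hm) ⟨m, hm⟩, colv R m (Nat.le_of_succ_le hm) j] b k)
          (Matrix.of fun (b : Fin 2) k =>
            ![colv R m (Nat.le_of_succ_le hm) ⟨m, hm⟩, colv R m (Nat.le_of_succ_le hm) j] b k)
          !![1, R ⟨m, hm⟩ j; R ⟨m, hm⟩ j, 1] := by
  have hmj : ¬ ((j : ℕ) < m + 1) := by omega
  ext k l
  cases k with
  | inl a =>
    have ha : (a : ℕ) < m + 1 := Nat.lt_succ_of_lt a.isLt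
    cases l with
    | inl a' =>
      have ha' : (a' : ℕ) < m + 1 := Nat.lt_succ_of_lt a'.isLt
      simp [brd, lead, colv, finSumFinEquiv, ha, ha', a.isLt, a'.isLt]; rfl
    | inr b =>
      fin_cases b <;>
        simp [brd, lead, colv, finSumFinEquiv, ha, a.isLt, Fin.natAdd] <;> rfl
  | inr b =>
    cases l with
    | inl a' =>
      have ha' : (a' : ℕ) < m + 1 := Nat.lt_succ_of_lt a'.isLt
      fin_cases b <;>
        simp [brd, lead, colv, finSumFinEquiv, ha', a'.isLt, Fin.natAdd] <;>
        first
          | (exact hsym ⟨m, hm⟩ (Fin.castLE (Nat.le_of_succ_le hm) a'))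
          | rfl
    | inr b' =>
      fin_cases b <;> fin_cases b' <;>
        simp [brd, lead, colv, finSumFinEquiv, Fin.natAdd, hdiag]

/-- Lemma 2 of the paper: for `j ≥ i + 1 ≥ 3`,
`det(R_i^{*j})/det(R_{i−1}) − det(R_{i+1}^{*j})/det(R_i)
  = (R_{ij} − ρ_i^{*j} R_{i−1}⁻¹ ρ_iᵀ)² · det(R_{i−1})/det(R_i)`.
Here `m = i − 1 ≥ 1` is 0-indexed and the paper's `R_i^{*j}` is `brd R m`. -/
theorem stmt6 {n : ℕ} (R : Matrix (Fin n) (Fin n) ℝ) (hR : R.PosDef)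
    (hdiag : ∀ k, R k k = 1) (m : ℕ) (hm1 : 1 ≤ m) (hm : m + 1 ≤ n) (jf : Fin n)
    (hj : m + 1 ≤ (jf : ℕ)) :
    (brd R m (Nat.le_of_succ_le hm) jf).det / (lead R m (Nat.le_of_succ_le hm)).det -
        (brd R (m + 1) hm jf).det / (lead R (m + 1) hm).det =
      (R ⟨m, hm⟩ jf - colv R m (Nat.le_of_succ_le hm) jf ⬝ᵥ
            (lead R m (Nat.le_of_succ_le hm))⁻¹ *ᵥ
              colv R m (Nat.le_of_succ_le hm) ⟨m, hm⟩) ^ 2 *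
        (lead R m (Nat.le_of_succ_le hm)).det / (lead R (m + 1) hm).det := by
  have h1 : m ≤ n := Nat.le_of_succ_le hm
  have hsym : ∀ p q, R p q = R q p := by
    intro p q
    have := congrFun (congrFun hR.1 p) q
    simpa [conjTranspose_apply] using this.symm
  set A := lead R m h1 with hA
  set u := colv R m h1 jf with hu
  set v := colv R m h1 ⟨m, hm⟩ with hv
  have hApd := lead_posDef hR m h1
  have hAdet : 0 < A.det := hApd.det_pos
  have hdet : IsUnit A.det := isUnit_iff_ne_zero.mpr hAdet.ne'
  haveI : Invertible A := A.invertibleOfIsUnitDet hdet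
  set c := R ⟨m, hm⟩ jf with hc
  set QU := u ⬝ᵥ A⁻¹ *ᵥ u with hQU
  set QV := v ⬝ᵥ A⁻¹ *ᵥ v with hQV
  set Q := u ⬝ᵥ A⁻¹ *ᵥ v with hQ
  have hqsym : v ⬝ᵥ A⁻¹ *ᵥ u = Q := symq _ hApd.1.inv v u
  have h2 : (brd R m h1 jf).det = A.det * (1 - QU) := det_brd hR m h1 jf
  have hlb : lead R (m + 1) hm = brd R m h1 ⟨m, hm⟩ := by
    ext k l
    simp only [lead, brd, submatrix_apply, of_apply]
    by_cases hk : (k : ℕ) < m <;> by_cases hl : (l : ℕ) < m <;> simp only [hk, hl, dif_pos, dif_neg, not_false_iff]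
    · rfl
    · have : Fin.castLE hm l = ⟨m, hm⟩ := Fin.ext (by simp only [Fin.coe_castLE]; omega)
      rw [this]; rfl
    · have : Fin.castLE hm k = ⟨m, hm⟩ := Fin.ext (by simp only [Fin.coe_castLE]; omega)
      rw [this]
      exact hsym ⟨m, hm⟩ (Fin.castLE hm l) |>.trans (by rfl)
    · have hk' : Fin.castLE hm k = ⟨m, hm⟩ := Fin.ext (by simp only [Fin.coe_castLE]; omega)
      have hl' : Fin.castLE hm l = ⟨m, hm⟩ := Fin.ext (by simp only [Fin.coe_castLE]; omega)
      rw [hk', hl', hdiag]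
  have h3 : (lead R (m + 1) hm).det = A.det * (1 - QV) := by
    rw [hlb]; exact det_brd hR m h1 ⟨m, hm⟩
  have h4 : (brd R (m + 1) hm jf).det
      = A.det * ((1 - QV) * (1 - QU) - (c - Q) * (c - Q)) := by
    rw [← det_submatrix_equiv_self (finSumFinEquiv (m := m) (n := 2)),
      brd2_block R hsym hdiag m hm jf hj, det_fromBlocks₁₁, invOf_eq_nonsing_inv]
    congr 1
    rw [det_fin_two]
    simp only [Matrix.sub_apply, CMB, of_apply]
    have ev : (fun k => colv R m (Nat.le_of_succ_le hm) ⟨m, hm⟩ k) = v := rfl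
    have eu : (fun k => colv R m (Nat.le_of_succ_le hm) jf k) = u := rfl
    have eA : (lead R m (Nat.le_of_succ_le hm))⁻¹ = A⁻¹ := rfl
    simp only [ev, eu, eA, Matrix.cons_val', Matrix.cons_val_zero, Matrix.cons_val_one,
      Matrix.head_cons, Matrix.empty_val', Matrix.cons_val_fin_one, Matrix.head_fin_const]
    all_goals rw [hqsym, ← hc]
    all_goals ring
  have hs : 0 < 1 - QV := by
    have hp := (lead_posDef hR (m + 1) hm).det_pos
    rw [h3] at hp
    nlinarith
  rw [h2, h3, h4]
  have ha : A.det ≠ 0 := hAdet.ne'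
  have hv' : 1 - QV ≠ 0 := hs.ne'
  field_simp
  ring
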